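/- arXiv:1811.06253 — 5 statements merged into one kernel-verified Lean document; each statement's English description precedes it below -/
import Mathlib

section
/- Siegel's lemma (used as Lemma in §3.2): Let M < N be positive integers and let A = (a_{ij}) be an M × N matrix of rank M with integer entries. Then the ℚ-vector space of solutions x ∈ ℚ^N of the homogeneous linear system A x = 0 admits a basis consisting of N − M vectors x^1, …, x^{N−M} all of whose coordinates x_j^l are integers and satisfy |x_j^l| ≤ √(|det(A Aᵀ)|) for all j = 1, …, N and l = 1, …, N − M. -/
open Matrix Finset Equiv Function

variable {R : Type*} [CommRing R]

lemma det_mul_eq_sum_fn {m n : ℕ} (A : Matrix (Fin m) (Fin n) R) (B : Matrix (Fin n) (Fin m) R) :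
    det (A * B) = ∑ p : Fin m → Fin n, (∏ i, B (p i) i) * det (A.submatrix id p) := by
  calc det (A * B)
      = ∑ σ : Perm (Fin m), ((Perm.sign σ : ℤ) : R) * ∏ i, ∑ k, A (σ i) k * B k i := by
        simp only [det_apply', mul_apply]
    _ = ∑ σ : Perm (Fin m), ∑ p : Fin m → Fin n,
          ((Perm.sign σ : ℤ) : R) * ∏ i, A (σ i) (p i) * B (p i) i := by
        simp only [prod_univ_sum, Fintype.piFinset_univ, mul_sum]
    _ = ∑ p : Fin m → Fin n, ∑ σ : Perm (Fin m),
          ((Perm.sign σ : ℤ) : R) * ∏ i, A (σ i) (p i) * B (p i) i := Finset.sum_comm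
    _ = ∑ p : Fin m → Fin n, det (Matrix.of fun r c => A r (p c) * B (p c) c) := by
        simp only [det_apply', Matrix.of_apply]
    _ = ∑ p : Fin m → Fin n, (∏ i, B (p i) i) * det (A.submatrix id p) := by
        refine Finset.sum_congr rfl fun p _ => ?_
        have : (Matrix.of fun r c => A r (p c) * B (p c) c)
            = Matrix.of fun r c => (fun c' => B (p c') c') c * ((A.submatrix id p)ᵀ)ᵀ r c := by
          ext r c; simp [mul_comm]
        rw [this]
        rw [show (Matrix.of fun r c => (fun c' => B (p c') c') c * ((A.submatrix id p)ᵀ)ᵀ r c)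
          = ((Matrix.of fun c r => (fun c' => B (p c') c') c * (A.submatrix id p)ᵀ c r))ᵀ from rfl]
        rw [det_transpose, det_mul_column, det_transpose]

/-- Factorization of an injective map `Fin m → Fin n` as strictly monotone ∘ permutation. -/
lemma exists_strictMono_perm {m n : ℕ} {p : Fin m → Fin n} (hp : Function.Injective p) :
    ∃ (g : Fin m → Fin n) (τ : Perm (Fin m)), StrictMono g ∧ p = g ∘ τ := by
  classical
  set s : Finset (Fin n) := Finset.image p Finset.univ with hs
  have hcard : s.card = m := by
    rw [hs, Finset.card_image_of_injective _ hp, Finset.card_univ, Fintype.card_fin]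
  set g := s.orderEmbOfFin hcard with hg
  have hmem : ∀ i, p i ∈ s := fun i => Finset.mem_image_of_mem _ (Finset.mem_univ i)
  have hbij : Function.Bijective (fun i => (s.orderIsoOfFin hcard).symm ⟨p i, hmem i⟩) := by
    refine (Finite.injective_iff_bijective).mp fun i j hij => ?_
    apply hp
    have := congrArg (s.orderIsoOfFin hcard) hij
    simpa using congrArg Subtype.val this
  refine ⟨g, Equiv.ofBijective _ hbij, (s.orderEmbOfFin hcard).strictMono, ?_⟩
  funext i
  show p i = g ((s.orderIsoOfFin hcard).symm ⟨p i, hmem i⟩)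
  have : g ((s.orderIsoOfFin hcard).symm ⟨p i, hmem i⟩)
      = ((s.orderIsoOfFin hcard) ((s.orderIsoOfFin hcard).symm ⟨p i, hmem i⟩) : Fin n) := rfl
  rw [this, OrderIso.apply_symm_apply]

lemma strictMono_eq_of_range {m n : ℕ} {g g' : Fin m → Fin n} (hg : StrictMono g)
    (hg' : StrictMono g') (h : Set.range g = Set.range g') : g = g' := by
  classical
  set s : Finset (Fin n) := Finset.image g Finset.univ with hs
  have hcard : s.card = m := by
    rw [hs, Finset.card_image_of_injective _ hg.injective, Finset.card_univ, Fintype.card_fin]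
  have h1 : g = s.orderEmbOfFin hcard :=
    Finset.orderEmbOfFin_unique hcard (fun x => Finset.mem_image_of_mem _ (Finset.mem_univ x)) hg
  have h2 : g' = s.orderEmbOfFin hcard := by
    refine Finset.orderEmbOfFin_unique hcard (fun x => ?_) hg'
    have : g' x ∈ Set.range g := h ▸ Set.mem_range_self x
    obtain ⟨y, hy⟩ := this
    exact hy ▸ Finset.mem_image_of_mem _ (Finset.mem_univ y)
  rw [h1, h2]

/-- **Cauchy–Binet formula.** -/
theorem cauchy_binet {m n : ℕ} (A : Matrix (Fin m) (Fin n) R) (B : Matrix (Fin n) (Fin m) R) :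
    det (A * B) = ∑ g : {g : Fin m → Fin n // StrictMono g},
      det (A.submatrix id g.1) * det (B.submatrix g.1 id) := by
  classical
  rw [det_mul_eq_sum_fn]
  have hzero : ∀ p : Fin m → Fin n, ¬ Function.Injective p →
      (∏ i, B (p i) i) * det (A.submatrix id p) = 0 := by
    intro p hp
    rw [Function.not_injective_iff] at hp
    obtain ⟨i, j, hpij, hij⟩ := hp
    rw [Matrix.det_zero_of_column_eq hij (fun k => by simp [hpij]), mul_zero]
  have step1 : (∑ p : Fin m → Fin n, (∏ i, B (p i) i) * det (A.submatrix id p))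
      = ∑ p : {p : Fin m → Fin n // Function.Injective p},
        (∏ i, B (p.1 i) i) * det (A.submatrix id p.1) := by
    rw [← Fintype.sum_subtype_add_sum_subtype (Function.Injective ·)
      (fun p => (∏ i, B (p i) i) * det (A.submatrix id p))]
    rw [Finset.sum_eq_zero (fun (p : {x : Fin m → Fin n // ¬ Function.Injective x}) _ => hzero p.1 p.2), add_zero]
  rw [step1]
  -- bijection {p // Injective p} ≃ {g // StrictMono g} × Perm (Fin m)
  have hbij : Function.Bijective (fun x : {g : Fin m → Fin n // StrictMono g} × Perm (Fin m) =>
      (⟨x.1.1 ∘ x.2, x.1.2.injective.comp x.2.injective⟩ :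
        {p : Fin m → Fin n // Function.Injective p})) := by
    constructor
    · rintro ⟨⟨g₁, h₁⟩, τ₁⟩ ⟨⟨g₂, h₂⟩, τ₂⟩ h
      have h' : g₁ ∘ τ₁ = g₂ ∘ τ₂ := congrArg Subtype.val h
      have hr : Set.range g₁ = Set.range g₂ := by
        have e1 : Set.range (g₁ ∘ τ₁) = Set.range g₁ := by
          rw [Set.range_comp, Set.range_eq_univ.mpr τ₁.surjective, Set.image_univ]
        have e2 : Set.range (g₂ ∘ τ₂) = Set.range g₂ := by
          rw [Set.range_comp, Set.range_eq_univ.mpr τ₂.surjective, Set.image_univ]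
        rw [← e1, ← e2, h']
      have hg : g₁ = g₂ := strictMono_eq_of_range h₁ h₂ hr
      subst hg
      have : τ₁ = τ₂ := by
        ext i
        exact congrArg Fin.val (h₁.injective (congrFun h' i))
      simp [this]
    · rintro ⟨p, hp⟩
      obtain ⟨g, τ, hg, hfact⟩ := exists_strictMono_perm hp
      exact ⟨⟨⟨g, hg⟩, τ⟩, by simp [← hfact]⟩
  rw [← Fintype.sum_bijective _ hbij _ _ (fun _ => rfl)]
  rw [Fintype.sum_prod_type]
  refine Finset.sum_congr rfl fun g _ => ?_
  -- inner sum over permutations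
  calc ∑ τ : Perm (Fin m), (∏ i, B (g.1 (τ i)) i) * det (A.submatrix id (g.1 ∘ τ))
      = ∑ τ : Perm (Fin m), (∏ i, B (g.1 (τ i)) i) *
          (((Perm.sign τ : ℤ) : R) * det (A.submatrix id g.1)) := by
        refine Finset.sum_congr rfl fun τ _ => ?_
        rw [show A.submatrix id (g.1 ∘ τ) = (A.submatrix id g.1).submatrix id τ from rfl,
          Matrix.det_permute']
    _ = det (A.submatrix id g.1) * ∑ τ : Perm (Fin m),
          ((Perm.sign τ : ℤ) : R) * ∏ i, (B.submatrix g.1 id) (τ i) i := by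
        rw [Finset.mul_sum]; refine Finset.sum_congr rfl fun τ _ => ?_; simp only [Matrix.submatrix_apply, id]; ring
    _ = det (A.submatrix id g.1) * det (B.submatrix g.1 id) := by rw [← det_apply']
  

lemma minor_sq_le_det_mul_transpose {m n : ℕ} (A : Matrix (Fin m) (Fin n) ℤ)
    {g : Fin m → Fin n} (hg : Function.Injective g) :
    det (A.submatrix id g) ^ 2 ≤ det (A * Aᵀ) := by
  obtain ⟨g₀, τ, hg₀, hfact⟩ := exists_strictMono_perm hg
  have hsq : det (A.submatrix id g) ^ 2 = det (A.submatrix id g₀) ^ 2 := by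
    rw [hfact, show A.submatrix id (g₀ ∘ τ) = (A.submatrix id g₀).submatrix id τ from rfl,
      Matrix.det_permute', mul_pow]
    rcases Int.units_eq_one_or (Perm.sign τ) with h | h <;> simp [h]
  rw [hsq, cauchy_binet]
  have hterm : ∀ h : {g : Fin m → Fin n // StrictMono g},
      det (A.submatrix id h.1) * det (Aᵀ.submatrix h.1 id) = det (A.submatrix id h.1) ^ 2 := by
    intro h
    rw [show Aᵀ.submatrix h.1 id = (A.submatrix id h.1)ᵀ from rfl, det_transpose, sq]
  have hs := Finset.single_le_sum (f := fun h : {g : Fin m → Fin n // StrictMono g} =>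
      det (A.submatrix id h.1) * det (Aᵀ.submatrix h.1 id))
      (fun h _ => by rw [hterm h]; positivity) (Finset.mem_univ ⟨g₀, hg₀⟩)
  dsimp only at hs
  rwa [hterm ⟨g₀, hg₀⟩] at hs

open Matrix Finset Module Submodule

lemma exists_nonzero_minor {M N : ℕ} (A : Matrix (Fin M) (Fin N) ℤ)
    (hrank : (A.map (Int.cast : ℤ → ℚ)).rank = M) :
    ∃ g : Fin M → Fin N, Function.Injective g ∧ det (A.submatrix id g) ≠ 0 := by
  classical
  set B := A.map (Int.cast : ℤ → ℚ) with hB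
  have hspan : span ℚ (Set.range Bᵀ) = ⊤ := by
    apply Submodule.eq_top_of_finrank_eq
    rw [show Set.range Bᵀ = Set.range B.col from rfl, ← Matrix.rank_eq_finrank_span_cols, hrank, finrank_fin_fun]
  obtain ⟨t, hts, htspan, htli⟩ := exists_linearIndependent ℚ (Set.range Bᵀ)
  rw [hspan] at htspan
  have htfin : t.Finite := Set.Finite.subset (Set.finite_range _) hts
  haveI := htfin.fintype
  have htcard : Fintype.card t = M := by
    have h1 : finrank ℚ (span ℚ t) = t.toFinset.card := finrank_span_set_eq_card htli
    rw [htspan] at h1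
    rw [← Set.toFinset_card, ← h1, finrank_top, finrank_fin_fun]
  -- choose preimages
  have hchoice : ∀ v : t, ∃ j : Fin N, Bᵀ j = (v : Fin M → ℚ) := fun v => hts v.2
  choose φ hφ using hchoice
  obtain ⟨eqv⟩ : Nonempty (Fin M ≃ t) := ⟨(Fintype.equivFinOfCardEq htcard).symm⟩
  refine ⟨fun k => φ (eqv k), ?_, ?_⟩
  · intro k k' h
    apply eqv.injective
    apply Subtype.ext
    simp only at h
    rw [← hφ (eqv k), ← hφ (eqv k'), h]
  · -- det over ℚ nonzero
    have hli : LinearIndependent ℚ (fun k : Fin M => Bᵀ (φ (eqv k))) := by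
      have : (fun k : Fin M => Bᵀ (φ (eqv k))) = (fun v : t => (v : Fin M → ℚ)) ∘ eqv := by
        funext k; simp [hφ]
      rw [this]
      exact htli.comp eqv eqv.injective
    have hli' : LinearIndependent ℚ (fun k : Fin M => (B.submatrix id (fun k => φ (eqv k)))ᵀ k) := by
      convert hli using 1
      rfl
    have hunit : IsUnit (B.submatrix id (fun k => φ (eqv k))) :=
      Matrix.linearIndependent_cols_iff_isUnit.mp hli'
    have hdet : det (B.submatrix id (fun k => φ (eqv k))) ≠ 0 := by
      have := hunit.map (Matrix.detMonoidHom)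
      simpa using this.ne_zero
    intro h0
    apply hdet
    have : B.submatrix id (fun k => φ (eqv k)) = (A.submatrix id (fun k => φ (eqv k))).map (Int.cast : ℤ → ℚ) := by
      ext i j; simp [hB]
    rw [this]
    have := RingHom.map_det (Int.castRingHom ℚ) (A.submatrix id (fun k => φ (eqv k)))
    simp only [RingHom.mapMatrix_apply] at this
    rw [show (A.submatrix id fun k => φ (eqv k)).map (Int.cast : ℤ → ℚ)
      = (A.submatrix id fun k => φ (eqv k)).map (Int.castRingHom ℚ) from rfl, ← this, h0]
    simp

open Matrix Finset Module Submodule Function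


/-- **Siegel's lemma.**  Let `A` be an `M × N` integer matrix (`M < N`) of rank `M`.
Then the space of rational solutions of `A x = 0` has a basis of `N − M` vectors whose
coordinates are integers bounded in absolute value by `√|det (A * Aᵀ)|`. -/
theorem siegel_lemma (M N : ℕ) (hM : 0 < M) (hMN : M < N)
    (A : Matrix (Fin M) (Fin N) ℤ)
    (hrank : (A.map (Int.cast : ℤ → ℚ)).rank = M) :
    ∃ x : Fin (N - M) → (Fin N → ℚ),
      LinearIndependent ℚ x ∧
      Submodule.span ℚ (Set.range x) =
        LinearMap.ker (Matrix.mulVecLin (A.map (Int.cast : ℤ → ℚ))) ∧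
      ∀ l j, ∃ z : ℤ, x l j = (z : ℚ) ∧
        (|z| : ℝ) ≤ Real.sqrt |(((A * A.transpose).det : ℤ) : ℝ)| := by
  classical
  obtain ⟨g₀, hg₀inj, hd⟩ := exists_nonzero_minor A hrank
  set d : ℤ := det (A.submatrix id g₀) with hd_def
  -- complement enumeration
  set s₀ : Finset (Fin N) := Finset.image g₀ Finset.univ with hs₀
  have hs₀card : s₀.card = M := by
    rw [hs₀, Finset.card_image_of_injective _ hg₀inj, Finset.card_univ, Fintype.card_fin]
  have hcompl : s₀ᶜ.card = N - M := by
    rw [Finset.card_compl, hs₀card, Fintype.card_fin]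
  set e : Fin (N - M) → Fin N := fun l => s₀ᶜ.orderEmbOfFin hcompl l with he
  have heinj : Function.Injective e := (s₀ᶜ.orderEmbOfFin hcompl).injective
  have hemem : ∀ l, e l ∈ s₀ᶜ := fun l => Finset.orderEmbOfFin_mem _ _ _
  have henotin : ∀ l, e l ∉ Set.range g₀ := by
    intro l ⟨k, hk⟩
    have := hemem l
    rw [Finset.mem_compl] at this
    exact this (hk ▸ Finset.mem_image_of_mem _ (Finset.mem_univ k))
  -- the tuple h l : Fin (M+1) → Fin N
  set h : Fin (N - M) → Fin (M + 1) → Fin N := fun l => Fin.cons (e l) g₀ with hh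
  have hhinj : ∀ l, Function.Injective (h l) := fun l =>
    Fin.cons_injective_iff.mpr ⟨henotin l, hg₀inj⟩
  -- the cofactor weights
  set w : Fin (N - M) → Fin (M + 1) → ℤ := fun l k =>
    (-1 : ℤ) ^ (k : ℕ) * det (A.submatrix id ((h l) ∘ Fin.succAbove k)) with hw
  set v : Fin (N - M) → Fin N → ℤ := fun l => Function.extend (h l) (w l) 0 with hv
  set x : Fin (N - M) → Fin N → ℚ := fun l j => ((v l j : ℤ) : ℚ) with hx
  -- coordinate facts
  have hv_apply : ∀ l k, v l (h l k) = w l k := fun l k =>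
    (hhinj l).extend_apply (w l) 0 k
  have hv_zero : ∀ l j, j ∉ Set.range (h l) → v l j = 0 := by
    intro l j hj
    show Function.extend (h l) (w l) 0 j = 0
    rw [Function.extend_apply' _ _ _ (by simpa using hj)]
    rfl
  have hveL : ∀ l, v l (e l) = d := by
    intro l
    have : e l = h l 0 := by simp [hh]
    rw [this, hv_apply]
    have hcomp : (h l) ∘ Fin.succAbove 0 = g₀ := by
      funext k
      simp [hh, Fin.succAbove_zero, Fin.cons_succ]
    simp only [hw, Fin.val_zero, pow_zero, one_mul, hcomp, hd_def]
  have hveL' : ∀ l l', l ≠ l' → v l (e l') = 0 := by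
    intro l l' hne
    apply hv_zero
    rintro ⟨k, hk⟩
    rcases Fin.eq_zero_or_eq_succ k with rfl | ⟨k', rfl⟩
    · exact hne (heinj (by simpa [hh] using hk))
    · exact henotin l' ⟨k', by simpa [hh] using hk⟩
  -- A *ᵥ v l = 0
  have hker : ∀ l, A *ᵥ (v l) = 0 := by
    intro l
    funext i0
    -- the (M+1)×(M+1) matrix with duplicated row
    set D : Matrix (Fin (M + 1)) (Fin (M + 1)) ℤ :=
      Matrix.of (Fin.cons (fun k => A i0 (h l k)) (fun r k => A r (h l k))) with hD
    have hD0 : det D = 0 := by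
      apply det_zero_of_row_eq (Fin.succ_ne_zero i0).symm
      funext k
      simp [hD]
    have hexp : det D = ∑ k : Fin (M + 1), (-1 : ℤ) ^ (k : ℕ) * A i0 (h l k) *
        det (A.submatrix id ((h l) ∘ Fin.succAbove k)) := by
      rw [det_succ_row_zero]
      refine Finset.sum_congr rfl fun k _ => ?_
      have e1 : D 0 k = A i0 (h l k) := by simp [hD]
      have e2 : D.submatrix Fin.succ (Fin.succAbove k)
          = A.submatrix id ((h l) ∘ Fin.succAbove k) := by
        ext r c; simp [hD]
      rw [e1, e2]
    have h1 : ∑ k : Fin (M + 1), A i0 (h l k) * w l k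
        = ∑ j ∈ Finset.image (h l) Finset.univ, A i0 j * v l j := by
      rw [Finset.sum_image (fun a _ b _ hab => hhinj l hab)]
      exact Finset.sum_congr rfl fun k _ => by rw [hv_apply]
    have hsum : (A *ᵥ (v l)) i0 = ∑ k : Fin (M + 1), A i0 (h l k) * w l k := by
      show (∑ j, A i0 j * v l j) = _
      rw [h1]
      refine (Finset.sum_subset (Finset.subset_univ _) ?_).symm
      intro j _ hj
      rw [hv_zero l j (by simpa using hj), mul_zero]
    show (A *ᵥ (v l)) i0 = 0
    rw [hsum, ← hD0, hexp]
    refine Finset.sum_congr rfl fun k _ => ?_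
    simp only [hw]; ring
  -- kernel membership over ℚ
  have hxker : ∀ l, Matrix.mulVecLin (A.map (Int.cast : ℤ → ℚ)) (x l) = 0 := by
    intro l
    funext i0
    have h0i := congrFun (hker l) i0
    show ∑ j, (A.map (Int.cast : ℤ → ℚ)) i0 j * x l j = 0
    have hcast : ∑ j, (A.map (Int.cast : ℤ → ℚ)) i0 j * x l j
        = ((∑ j, A i0 j * v l j : ℤ) : ℚ) := by
      push_cast
      exact Finset.sum_congr rfl fun j _ => by simp [Matrix.map_apply, hx]
    rw [hcast]
    have : (∑ j, A i0 j * v l j) = 0 := h0i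
    rw [this, Int.cast_zero]
  -- linear independence
  have hd' : (d : ℚ) ≠ 0 := Int.cast_ne_zero.mpr hd
  have hxli : LinearIndependent ℚ x := by
    rw [Fintype.linearIndependent_iff]
    intro c hc l
    have hcl := congrFun hc (e l)
    simp only [Finset.sum_apply, Pi.smul_apply, smul_eq_mul, Pi.zero_apply] at hcl
    rw [Finset.sum_eq_single l (fun l' _ hne => by
      simp only [hx]
      rw [hveL' l' l hne, Int.cast_zero, mul_zero]) (fun habs => absurd (Finset.mem_univ l) habs)]
      at hcl
    have : x l (e l) = (d : ℚ) := by rw [hx]; simp only []; rw [hveL l]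
    rw [this] at hcl
    exact (mul_eq_zero.mp hcl).resolve_right hd'
  -- dimension of the kernel
  have hfr : finrank ℚ (LinearMap.ker (Matrix.mulVecLin (A.map (Int.cast : ℤ → ℚ)))) = N - M := by
    have h1 := LinearMap.finrank_range_add_finrank_ker
      (Matrix.mulVecLin (A.map (Int.cast : ℤ → ℚ)))
    rw [Module.finrank_fin_fun] at h1
    rw [Matrix.rank] at hrank
    omega
  have hspanle : Submodule.span ℚ (Set.range x)
      ≤ LinearMap.ker (Matrix.mulVecLin (A.map (Int.cast : ℤ → ℚ))) := by
    rw [Submodule.span_le]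
    rintro _ ⟨l, rfl⟩
    exact LinearMap.mem_ker.mpr (hxker l)
  have hspan : Submodule.span ℚ (Set.range x)
      = LinearMap.ker (Matrix.mulVecLin (A.map (Int.cast : ℤ → ℚ))) := by
    apply Submodule.eq_of_le_of_finrank_le hspanle
    rw [hfr, finrank_span_eq_card hxli, Fintype.card_fin]
  refine ⟨x, hxli, hspan, ?_⟩
  intro l j
  refine ⟨v l j, rfl, ?_⟩
  by_cases hjr : j ∈ Set.range (h l)
  · obtain ⟨k, rfl⟩ := hjr
    rw [hv_apply]
    have hinj2 : Function.Injective ((h l) ∘ Fin.succAbove k) :=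
      (hhinj l).comp (Fin.succAbove_right_injective)
    have hb := minor_sq_le_det_mul_transpose A hinj2
    have hsq : (w l k) ^ 2 = det (A.submatrix id ((h l) ∘ Fin.succAbove k)) ^ 2 := by
      rw [hw]
      simp only []
      rw [mul_pow, ← pow_mul, pow_mul']
      simp
    rw [Real.le_sqrt (by positivity) (abs_nonneg _)]
    rw [sq_abs]
    have : ((w l k : ℤ) : ℝ) ^ 2 = (((w l k) ^ 2 : ℤ) : ℝ) := by push_cast; ring
    rw [this, hsq]
    have h2 : (det (A.submatrix id ((h l) ∘ Fin.succAbove k)) ^ 2 : ℤ)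
        ≤ |det (A * Aᵀ)| := le_trans hb (le_abs_self _)
    calc ((det (A.submatrix id ((h l) ∘ Fin.succAbove k)) ^ 2 : ℤ) : ℝ)
        ≤ ((|det (A * Aᵀ)| : ℤ) : ℝ) := Int.cast_le.mpr h2
      _ = |((det (A * Aᵀ) : ℤ) : ℝ)| := by push_cast; ring
  · rw [hv_zero l j hjr]
    simpa using Real.sqrt_nonneg _
end

section
/- Extracting small ℤ-bases (Lemma in §3.2): Let V be a vector space over ℚ endowed with a norm ‖·‖ and let V_ℤ be a free ℤ-submodule of V which spans V over ℚ. Given a basis {u_1, …, u_N} of V over ℚ lying in V_ℤ, there exists a subset {v_1, …, v_N} of V_ℤ with the property that for every i = 1, …, N, the set {v_1, …, v_i} is a ℤ-basis of (ℚ u_1 + ⋯ + ℚ u_i) ∩ V_ℤ and ‖v_i‖ ≤ Σ_{j=1}^{i} ‖u_j‖. -/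
/-- A finitely generated `ℤ`-submodule of `ℚ` is cyclic. -/
lemma fg_cyclic_aux (G : Submodule ℤ ℚ) (hG : G.FG) : ∃ c : ℚ, G = Submodule.span ℤ {c} := by
  obtain ⟨s, hs⟩ := hG
  set d : ℤ := ∏ x ∈ s, (x.den : ℤ) with hd
  have hdpos : 0 < d := Finset.prod_pos (fun x _ => by positivity)
  have hdQ : (d : ℚ) ≠ 0 := by exact_mod_cast hdpos.ne'
  set f : ℤ →ₗ[ℤ] ℚ := LinearMap.toSpanSingleton ℤ ℚ ((d : ℚ)⁻¹) with hf
  have hrange : G ≤ LinearMap.range f := by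
    rw [← hs, Submodule.span_le]
    intro x hx
    obtain ⟨k, hk⟩ : (x.den : ℤ) ∣ d := Finset.dvd_prod_of_mem _ hx
    refine ⟨k * x.num, ?_⟩
    have hxd : x * (x.den : ℚ) = (x.num : ℚ) := Rat.mul_den_eq_num x
    have h1 : f (k * x.num) = (k * x.num : ℤ) • ((d : ℚ)⁻¹) := rfl
    have h2 : ((k * x.num : ℤ) : ℚ) = x * (d : ℚ) := by
      push_cast [hk]
      rw [← hxd]; ring
    rw [h1, zsmul_eq_mul, h2, mul_assoc, mul_inv_cancel₀ hdQ, mul_one]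
  haveI : (Submodule.comap f G).IsPrincipal := IsPrincipalIdealRing.principal _
  obtain ⟨a, ha⟩ := Submodule.IsPrincipal.principal (Submodule.comap f G)
  refine ⟨f a, ?_⟩
  rw [← Submodule.map_comap_eq_self hrange, ha, Submodule.map_span, Set.image_singleton]

/-- **Extracting small ℤ-bases.**  Let `V` be a ℚ-vector space with a norm `nrm`, and let
`VZ` be a free ℤ-submodule of `V` spanning `V` over ℚ.  Given a ℚ-basis `u 0, …, u (n-1)`
of `V` contained in `VZ`, there is a family `v 0, …, v (n-1)` of elements of `VZ` such that
for every `i` the family `{v j : j ≤ i}` is a ℤ-basis of `(ℚ u 0 + ⋯ + ℚ u i) ∩ VZ`, and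
`‖v i‖ ≤ Σ_{j ≤ i} ‖u j‖`. -/
theorem extracting_small_int_bases
    (V : Type*) [AddCommGroup V] [Module ℚ V] (nrm : V → ℝ)
    (h_add : ∀ x y : V, nrm (x + y) ≤ nrm x + nrm y)
    (h_smul : ∀ (q : ℚ) (x : V), nrm (q • x) = |q| * nrm x)
    (h_eq_zero : ∀ x : V, nrm x = 0 → x = 0)
    (VZ : Submodule ℤ V) (hfree : Module.Free ℤ VZ)
    (hspan : Submodule.span ℚ (VZ : Set V) = ⊤)
    (n : ℕ) (u : Fin n → V)
    (hu_indep : LinearIndependent ℚ u)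
    (hu_span : Submodule.span ℚ (Set.range u) = ⊤)
    (huZ : ∀ i, u i ∈ VZ) :
    ∃ v : Fin n → V,
      (∀ i, v i ∈ VZ) ∧
      LinearIndependent ℤ v ∧
      (∀ i : Fin n,
        Submodule.span ℤ (v '' {j | j ≤ i}) =
          (Submodule.span ℚ (u '' {j | j ≤ i})).restrictScalars ℤ ⊓ VZ) ∧
      ∀ i : Fin n, nrm (v i) ≤ ∑ j ∈ Finset.Iic i, nrm (u j) := by
  classical
  -- basic properties of the norm
  have hzero : nrm 0 = 0 := by
    have := h_smul 0 0; simpa using this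
  have hnn : ∀ x : V, 0 ≤ nrm x := by
    intro x
    have h1 : nrm (-x) = nrm x := by
      have := h_smul (-1) x; simpa using this
    have h2 := h_add x (-x)
    rw [add_neg_cancel, hzero, h1] at h2
    linarith
  have hsum : ∀ (s : Finset (Fin n)) (f : Fin n → V),
      nrm (∑ j ∈ s, f j) ≤ ∑ j ∈ s, nrm (f j) := by
    intro s f
    induction s using Finset.cons_induction with
    | empty => simp [hzero]
    | cons a s ha ih =>
      rw [Finset.sum_cons, Finset.sum_cons]
      exact le_trans (h_add _ _) (by linarith)
  -- the basis
  let b : Module.Basis (Fin n) ℚ V := Module.Basis.mk hu_indep (by rw [hu_span])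
  have hbu : ⇑b = u := funext fun i => Module.Basis.mk_apply _ _ i
  haveI : FiniteDimensional ℚ V := Module.Finite.of_basis b
  have hmemspan : ∀ (s : Set (Fin n)) (x : V),
      x ∈ Submodule.span ℚ (u '' s) ↔ ∀ j, j ∉ s → b.repr x j = 0 := by
    intro s x
    rw [← hbu, Module.Basis.mem_span_image]
    constructor
    · intro h j hj
      by_contra hne
      exact hj (h (Finsupp.mem_support_iff.2 hne))
    · intro h j hj
      by_contra hns
      exact (Finsupp.mem_support_iff.1 hj) (h j hns)
  have hru : ∀ k j : Fin n, b.repr (u k) j = if k = j then 1 else 0 := by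
    intro k j
    rw [← hbu, b.repr_self, Finsupp.single_apply]
  -- VZ is a Noetherian ℤ-module
  haveI := hfree
  let bz := Module.Free.chooseBasis ℤ VZ
  have hzi : LinearIndependent ℤ (fun k => (bz k : V)) :=
    bz.linearIndependent.map' VZ.subtype (Submodule.ker_subtype VZ)
  have hqi : LinearIndependent ℚ (fun k => (bz k : V)) :=
    (LinearIndependent.iff_fractionRing ℤ ℚ).1 hzi
  haveI : Finite (Module.Free.ChooseBasisIndex ℤ VZ) := hqi.finite
  haveI : Fintype (Module.Free.ChooseBasisIndex ℤ VZ) := Fintype.ofFinite _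
  haveI : Module.Finite ℤ VZ := Module.Finite.of_basis bz
  haveI : IsNoetherian ℤ VZ := isNoetherian_of_isNoetherianRing_of_finite ℤ VZ
  -- the submodules W i
  set W : Fin n → Submodule ℤ V := fun i =>
    (Submodule.span ℚ (u '' {j | j ≤ i})).restrictScalars ℤ ⊓ VZ with hW
  have hWmem : ∀ (i : Fin n) (x : V),
      x ∈ W i ↔ x ∈ Submodule.span ℚ (u '' {j | j ≤ i}) ∧ x ∈ VZ := by
    intro i x
    rw [hW, Submodule.mem_inf, Submodule.restrictScalars_mem]
  have hWfg : ∀ i : Fin n, (W i).FG := by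
    intro i
    have h1 : W i = Submodule.map VZ.subtype (Submodule.comap VZ.subtype (W i)) := by
      rw [Submodule.map_comap_subtype]
      exact (inf_eq_right.2 inf_le_right).symm
    rw [h1]
    exact Submodule.FG.map _ (IsNoetherian.noetherian _)
  have huW : ∀ (i j : Fin n), j ≤ i → u j ∈ W i := by
    intro i j hj
    exact (hWmem i (u j)).2 ⟨Submodule.subset_span ⟨j, hj, rfl⟩, huZ j⟩
  -- the coordinate projections and the image submodules
  set πz : Fin n → (V →ₗ[ℤ] ℚ) := fun i => (b.coord i).restrictScalars ℤ with hπz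
  have hπzr : ∀ (i : Fin n) (x : V), πz i x = b.repr x i := fun i x => rfl
  set G : Fin n → Submodule ℤ ℚ := fun i => (W i).map (πz i) with hG
  have hGfg : ∀ i, (G i).FG := fun i => Submodule.FG.map _ (hWfg i)
  choose c hc using fun i => fg_cyclic_aux (G i) (hGfg i)
  -- 1 ∈ G i, hence |c i| ≤ 1 and c i ≠ 0
  have h1G : ∀ i, (1 : ℚ) ∈ G i := by
    intro i
    refine ⟨u i, huW i i le_rfl, ?_⟩
    rw [hπzr, hru]; simp
  have hcm : ∀ i, ∃ m : ℤ, m • c i = 1 := by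
    intro i
    have := h1G i
    rw [hc i, Submodule.mem_span_singleton] at this
    exact this
  have hcabs : ∀ i, |c i| ≤ 1 := by
    intro i
    obtain ⟨m, hm⟩ := hcm i
    have hm0 : m ≠ 0 := by rintro rfl; simp at hm
    have h1 : |(m : ℚ)| * |c i| = 1 := by
      rw [← abs_mul]
      rw [zsmul_eq_mul] at hm
      rw [hm]; simp
    have h2 : (1 : ℚ) ≤ |(m : ℚ)| := by
      rw [← Int.cast_abs]
      exact_mod_cast Int.one_le_abs hm0
    nlinarith [abs_nonneg (c i)]
  have hcne : ∀ i, c i ≠ 0 := by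
    intro i hc0
    obtain ⟨m, hm⟩ := hcm i
    rw [hc0] at hm; simp at hm
  -- choose w i ∈ W i with coordinate c i
  have hcw : ∀ i, ∃ y ∈ W i, πz i y = c i := by
    intro i
    have hmem : c i ∈ G i := by rw [hc i]; exact Submodule.mem_span_singleton_self _
    exact Submodule.mem_map.1 hmem
  choose w hwW hwc using hcw
  -- define v
  set v : Fin n → V := fun i => w i - ∑ j ∈ Finset.Iio i, ⌊b.repr (w i) j⌋ • u j with hv
  have hvVZ : ∀ i, v i ∈ VZ := by
    intro i
    exact sub_mem ((hWmem i (w i)).1 (hwW i)).2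
      (Submodule.sum_mem _ fun j _ => Submodule.smul_mem _ _ (huZ j))
  have hvspan : ∀ i, v i ∈ Submodule.span ℚ (u '' {j | j ≤ i}) := by
    intro i
    refine sub_mem ((hWmem i (w i)).1 (hwW i)).1 (Submodule.sum_mem _ fun j hj => ?_)
    have hjmem : u j ∈ u '' {k | k ≤ i} :=
      Set.mem_image_of_mem u (show j ∈ {k | k ≤ i} from le_of_lt (Finset.mem_Iio.1 hj))
    exact zsmul_mem (Submodule.subset_span hjmem) _
  -- coordinates of v
  have hrv : ∀ i j, b.repr (v i) j =
      b.repr (w i) j - (if j < i then (⌊b.repr (w i) j⌋ : ℚ) else 0) := by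
    intro i j
    have h2 : b.repr (v i) j = b.repr (w i) j -
        ∑ k ∈ Finset.Iio i, (⌊b.repr (w i) k⌋ : ℚ) * (if k = j then 1 else 0) := by
      rw [hv]
      simp only [map_sub, map_sum, map_zsmul, Finsupp.sub_apply, Finsupp.coe_finset_sum,
        Finset.sum_apply, Finsupp.smul_apply, hru, zsmul_eq_mul]
    rw [h2]
    congr 1
    simp only [mul_ite, mul_one, mul_zero, Finset.sum_ite_eq', Finset.mem_Iio]
  have hrvi : ∀ i, b.repr (v i) i = c i := by
    intro i
    rw [hrv, if_neg (lt_irrefl i), sub_zero]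
    exact hwc i
  have hrv_gt : ∀ i j, i < j → b.repr (v i) j = 0 := by
    intro i j hij
    exact (hmemspan _ _).1 (hvspan i) j (by simpa using not_le.2 hij)
  have hrv_abs : ∀ i j, j ≤ i → |b.repr (v i) j| ≤ 1 := by
    intro i j hj
    rcases eq_or_lt_of_le hj with rfl | hlt
    · rw [hrvi]; exact hcabs j
    · rw [hrv, if_pos hlt]
      have h0 : (⌊b.repr (w i) j⌋ : ℚ) ≤ b.repr (w i) j := Int.floor_le _
      have h1 : b.repr (w i) j < ⌊b.repr (w i) j⌋ + 1 := Int.lt_floor_add_one _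
      rw [abs_le]; constructor <;> linarith
  -- norm bound
  have hnorm : ∀ i, nrm (v i) ≤ ∑ j ∈ Finset.Iic i, nrm (u j) := by
    intro i
    have hvsum : v i = ∑ j ∈ Finset.Iic i, b.repr (v i) j • u j := by
      have h1 : ∑ j ∈ Finset.Iic i, b.repr (v i) j • u j
          = ∑ j : Fin n, b.repr (v i) j • u j := by
        refine Finset.sum_subset (Finset.subset_univ _) (fun j _ hj => ?_)
        rw [hrv_gt i j (by simpa using Finset.mem_Iic.not.1 hj)]
        simp
      rw [h1, ← hbu, b.sum_repr]
    obtain ⟨q, habs, hvq⟩ : ∃ q : Fin n → ℚ,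
        (∀ j ∈ Finset.Iic i, |q j| ≤ 1) ∧ v i = ∑ j ∈ Finset.Iic i, q j • u j :=
      ⟨fun j => b.repr (v i) j, fun j hj => hrv_abs i j (Finset.mem_Iic.1 hj), hvsum⟩
    rw [hvq]
    refine le_trans (hsum _ _) (Finset.sum_le_sum fun j hj => ?_)
    rw [h_smul]
    have hq1 : ((|q j| : ℚ) : ℝ) ≤ 1 := by exact_mod_cast habs j hj
    calc ((|q j| : ℚ) : ℝ) * nrm (u j) ≤ 1 * nrm (u j) :=
          mul_le_mul_of_nonneg_right hq1 (hnn _)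
      _ = nrm (u j) := one_mul _
  -- v j ∈ W i for j ≤ i
  have hvW : ∀ (i j : Fin n), j ≤ i → v j ∈ W i := by
    intro i j hj
    refine (hWmem i (v j)).2 ⟨?_, hvVZ j⟩
    exact Submodule.span_mono (Set.image_mono (f := u) (fun k hk => le_trans hk hj)) (hvspan j)
  -- span inclusion: W i ≤ span ℤ (v '' {j ≤ i}), by strong induction
  have hkeyle : ∀ (m : ℕ) (i : Fin n), (i : ℕ) = m →
      ∀ x, x ∈ W i → x ∈ Submodule.span ℤ (v '' {j | j ≤ i}) := by
    intro m
    induction m using Nat.strong_induction_on with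
    | _ m IH =>
      rintro i rfl x hxW
      have hGx : b.repr x i ∈ G i := ⟨x, hxW, hπzr i x⟩
      rw [hc i, Submodule.mem_span_singleton] at hGx
      obtain ⟨k, hk⟩ := hGx
      have hvmem : v i ∈ Submodule.span ℤ (v '' {j | j ≤ i}) :=
        Submodule.subset_span ⟨i, by simp, rfl⟩
      have hxspan := ((hWmem i x).1 hxW).1
      have hxVZ := ((hWmem i x).1 hxW).2
      set y := x - k • v i with hy
      have hyspan : y ∈ Submodule.span ℚ (u '' {j | j ≤ i}) :=
        sub_mem hxspan (zsmul_mem (hvspan i) k)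
      have hyVZ : y ∈ VZ := sub_mem hxVZ (Submodule.smul_mem _ _ (hvVZ i))
      have hyi : b.repr y i = 0 := by
        have hk' : (k : ℚ) * c i = b.repr x i := by rw [← zsmul_eq_mul]; exact hk
        rw [hy, map_sub, map_zsmul, Finsupp.sub_apply, Finsupp.smul_apply, hrvi,
          zsmul_eq_mul, hk', sub_self]
      have hygt : ∀ j, i < j → b.repr y j = 0 := by
        intro j hij
        exact (hmemspan _ _).1 hyspan j (by simpa using not_le.2 hij)
      suffices hys : y ∈ Submodule.span ℤ (v '' {j | j ≤ i}) by
        have h2 := Submodule.add_mem _ hys (Submodule.smul_mem _ k hvmem)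
        rw [hy] at h2
        simpa using h2
      rcases Nat.eq_zero_or_pos (i : ℕ) with h0 | h0
      · have hy0 : y = 0 := by
          rw [← b.forall_coord_eq_zero_iff]
          intro j
          rw [Module.Basis.coord_apply]
          rcases eq_or_ne j i with rfl | hne
          · exact hyi
          · refine hygt j ?_
            rw [Fin.lt_def]
            have : (j : ℕ) ≠ (i : ℕ) := fun h => hne (Fin.ext h)
            omega
        rw [hy0]; exact zero_mem _
      · set i' : Fin n := ⟨(i : ℕ) - 1, by omega⟩ with hi'
        have hspan' : y ∈ Submodule.span ℚ (u '' {j | j ≤ i'}) := by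
          rw [hmemspan]
          intro j hj
          have hj' : (i : ℕ) - 1 < (j : ℕ) := by
            simpa [hi', Fin.le_def, not_le] using hj
          rcases eq_or_ne j i with rfl | hne
          · exact hyi
          · refine hygt j ?_
            rw [Fin.lt_def]
            have : (j : ℕ) ≠ (i : ℕ) := fun h => hne (Fin.ext h)
            omega
        have hyW' : y ∈ W i' := (hWmem i' y).2 ⟨hspan', hyVZ⟩
        have := IH ((i : ℕ) - 1) (by omega) i' rfl y hyW'
        refine Submodule.span_mono (Set.image_mono (f := v) (fun j hj => ?_)) this
        have hj' : j ≤ i' := hj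
        show j ≤ i
        refine le_trans hj' ?_
        rw [Fin.le_def, hi']
        exact Nat.sub_le _ _
  have hkey : ∀ i : Fin n,
      Submodule.span ℤ (v '' {j | j ≤ i}) = W i := by
    intro i
    refine le_antisymm ?_ ?_
    · rw [Submodule.span_le]
      rintro _ ⟨j, hj, rfl⟩
      exact hvW i j hj
    · intro x hx
      exact hkeyle (i : ℕ) i rfl x hx
  -- linear independence
  have hvspanQ : ⊤ ≤ Submodule.span ℚ (Set.range v) := by
    rw [← hu_span]
    refine Submodule.span_le.2 ?_
    rintro _ ⟨j, rfl⟩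
    have h1 : u j ∈ Submodule.span ℤ (v '' {k | k ≤ j}) := by
      have : u j ∈ W j := huW j j le_rfl
      rw [← hkey j] at this
      exact this
    have h2 : Submodule.span ℤ (v '' {k | k ≤ j}) ≤
        (Submodule.span ℚ (Set.range v)).restrictScalars ℤ := by
      refine Submodule.span_le.2 ?_
      rintro _ ⟨k, _, rfl⟩
      exact Submodule.subset_span ⟨k, rfl⟩
    exact h2 h1
  have hcard : Fintype.card (Fin n) = Module.finrank ℚ V := by
    exact (Module.finrank_eq_card_basis b).symm
  have hliQ : LinearIndependent ℚ v :=
    linearIndependent_of_top_le_span_of_card_eq_finrank hvspanQ hcard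
  have hliZ : LinearIndependent ℤ v :=
    hliQ.restrict_scalars (smul_left_injective ℤ one_ne_zero)
  refine ⟨v, hvVZ, hliZ, fun i => ?_, hnorm⟩
  rw [hkey i, hW]
end

section
/- Claim in Step 3 of the proof of Proposition 3.1: Let 𝔤 be a finite-dimensional Lie algebra over ℚ with solvable radical 𝔯 = R(𝔤), and let f : 𝔤 → 𝔯/[𝔯,𝔯] be a ℚ-linear map such that (i) the restriction of f to 𝔯 equals the canonical projection 𝔯 → 𝔯/[𝔯,𝔯], and (ii) f([u,v]) = u·f(v) − v·f(u) for all u, v ∈ 𝔤, where · denotes the action of 𝔤 on the module 𝔯/[𝔯,𝔯]. Then ker f is a Lie subalgebra of 𝔤 whose solvable radical equals [𝔯,𝔯]. -/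
/-- The derived ideal `⁅𝔯, 𝔯⁆` of the solvable radical `𝔯` of a Lie algebra. -/
noncomputable def derivedRadical (L : Type*) [LieRing L] [LieAlgebra ℚ L] : LieIdeal ℚ L :=
  ⁅LieAlgebra.radical ℚ L, LieAlgebra.radical ℚ L⁆

section Aux

variable {R : Type*} {L : Type*} {L' : Type*} [CommRing R]
  [LieRing L] [LieAlgebra R L] [LieRing L'] [LieAlgebra R L']

/-- Quotient map by a Lie ideal as a Lie algebra homomorphism. -/
def lieQuotMk (I : LieIdeal R L) : L →ₗ⁅R⁆ L ⧸ I :=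
  { (LieSubmodule.toSubmodule I).mkQ with
    map_lie' := rfl }

lemma lieQuotMk_apply (I : LieIdeal R L) (x : L) :
    lieQuotMk I x = LieSubmodule.Quotient.mk (N := I) x := rfl

lemma lieQuotMk_surjective (I : LieIdeal R L) : Function.Surjective (lieQuotMk I) :=
  Submodule.mkQ_surjective _

lemma map_derivedSeriesOfIdeal (f : L →ₗ⁅R⁆ L') (h : Function.Surjective f)
    (I : LieIdeal R L) (k : ℕ) :
    LieIdeal.map f (LieAlgebra.derivedSeriesOfIdeal R L k I) =
      LieAlgebra.derivedSeriesOfIdeal R L' k (LieIdeal.map f I) := by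
  induction k with
  | zero => simp
  | succ k ih =>
    rw [LieAlgebra.derivedSeriesOfIdeal_succ, LieAlgebra.derivedSeriesOfIdeal_succ,
      LieIdeal.map_bracket_eq _ h, ih]

lemma isSolvable_of_derived_le {I I' : LieIdeal R L} (hI' : LieAlgebra.IsSolvable I')
    (k : ℕ) (h : LieAlgebra.derivedSeriesOfIdeal R L k I ≤ I') :
    LieAlgebra.IsSolvable I := by
  obtain ⟨l, hl⟩ := (LieAlgebra.isSolvable_iff R I').mp hI'
  rw [LieIdeal.derivedSeries_eq_bot_iff] at hl
  refine LieAlgebra.IsSolvable.mk (R := R) (k := l + k) ?_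
  rw [LieIdeal.derivedSeries_eq_bot_iff, LieAlgebra.derivedSeriesOfIdeal_add, eq_bot_iff, ← hl]
  exact LieAlgebra.derivedSeriesOfIdeal_mono h l

end Aux

/-- **Claim in Step 3 of the proof of Proposition 3.1.**  Let `𝔤 = L` be a
finite-dimensional Lie algebra over ℚ with solvable radical `𝔯`, and let
`f : 𝔤 → 𝔯/[𝔯,𝔯]` be a ℚ-linear map (realized as a linear map into `𝔤/[𝔯,𝔯]` whose range
lies in the image of `𝔯`) which restricts to the canonical projection on `𝔯` and satisfies
`f ⁅u, v⁆ = u • f v − v • f u` for the adjoint action on the quotient module.  Then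
`ker f` is a Lie subalgebra of `𝔤` whose solvable radical equals `[𝔯,𝔯]`. -/
theorem ker_is_subalgebra_with_radical_derived
    (L : Type*) [LieRing L] [LieAlgebra ℚ L] [Module.Finite ℚ L]
    (f : L →ₗ[ℚ] (L ⧸ derivedRadical L))
    (hrange : ∀ u : L, ∃ r ∈ LieAlgebra.radical ℚ L,
      f u = LieSubmodule.Quotient.mk' (derivedRadical L) r)
    (hproj : ∀ r ∈ LieAlgebra.radical ℚ L,
      f r = LieSubmodule.Quotient.mk' (derivedRadical L) r)
    (hcocycle : ∀ u v : L, f ⁅u, v⁆ = ⁅u, f v⁆ - ⁅v, f u⁆) :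
    ∃ K : LieSubalgebra ℚ L,
      K.toSubmodule = LinearMap.ker f ∧
      Submodule.map K.incl.toLinearMap
          (LieSubmodule.toSubmodule (LieAlgebra.radical ℚ K)) =
        LieSubmodule.toSubmodule (derivedRadical L) := by
  haveI : IsNoetherian ℚ L := isNoetherian_of_isNoetherianRing_of_finite ℚ L
  -- the kernel of `f` is a Lie subalgebra
  have hDr : derivedRadical L ≤ LieAlgebra.radical ℚ L := LieSubmodule.lie_le_left _ _
  let K : LieSubalgebra ℚ L :=
    { LinearMap.ker f with
      lie_mem' := by
        intro x y hx hy
        have hx' : f x = 0 := hx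
        have hy' : f y = 0 := hy
        show f ⁅x, y⁆ = 0
        rw [hcocycle x y, hx', hy', lie_zero, lie_zero, sub_zero] }
  have memK : ∀ x : L, x ∈ K ↔ f x = 0 := fun x => Iff.rfl
  have hD_mem_K : ∀ x ∈ (derivedRadical L), x ∈ K := by
    intro x hx
    rw [memK, hproj x (hDr hx)]
    exact (LieSubmodule.Quotient.mk_eq_zero _).mpr hx
  refine ⟨K, rfl, ?_⟩
  haveI : IsNoetherian ℚ K := inferInstanceAs (IsNoetherian ℚ K.toSubmodule)
  -- the quotient map `π : L → L ⧸ (LieAlgebra.radical ℚ L)` and its restriction `φ` to `K`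
  let π : L →ₗ⁅ℚ⁆ L ⧸ (LieAlgebra.radical ℚ L) := lieQuotMk (LieAlgebra.radical ℚ L)
  let φ : K →ₗ⁅ℚ⁆ L ⧸ (LieAlgebra.radical ℚ L) := π.comp K.incl
  have hφsurj : Function.Surjective φ := by
    intro q
    obtain ⟨u, rfl⟩ := lieQuotMk_surjective (LieAlgebra.radical ℚ L) q
    obtain ⟨r, hr, hfu⟩ := hrange u
    have hur : u - r ∈ K := by
      rw [memK, map_sub, hfu, hproj r hr, sub_self]
    refine ⟨⟨u - r, hur⟩, ?_⟩
    show π (u - r) = π u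
    rw [lieQuotMk_apply, lieQuotMk_apply]
    rw [Submodule.Quotient.eq]
    simpa using Submodule.neg_mem _ hr
  -- the image of the radical of K, pulled back to L, is a solvable ideal of L
  let M : LieIdeal ℚ (L ⧸ (LieAlgebra.radical ℚ L)) := LieIdeal.map φ (LieAlgebra.radical ℚ K)
  let N : LieIdeal ℚ L := LieIdeal.comap π M
  obtain ⟨k, hk⟩ := LieAlgebra.IsSolvable.solvable ℚ (LieAlgebra.radical ℚ K)
  rw [LieIdeal.derivedSeries_eq_bot_iff] at hk
  have hM : LieAlgebra.derivedSeriesOfIdeal ℚ (L ⧸ (LieAlgebra.radical ℚ L)) k M = ⊥ := by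
    rw [show M = LieIdeal.map φ (LieAlgebra.radical ℚ K) from rfl,
      ← map_derivedSeriesOfIdeal φ hφsurj, hk]
    simp [LieIdeal.map_eq_bot_iff]
  have hπN : LieIdeal.map π N = M := by
    rw [show N = LieIdeal.comap π M from rfl, LieIdeal.map_comap_eq
      (LieHom.isIdealMorphism_of_surjective π (lieQuotMk_surjective (LieAlgebra.radical ℚ L))),
      π.idealRange_eq_top_of_surjective (lieQuotMk_surjective (LieAlgebra.radical ℚ L)), top_inf_eq]
  have hNk : LieAlgebra.derivedSeriesOfIdeal ℚ L k N ≤ (LieAlgebra.radical ℚ L) := by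
    intro x hx
    have h1 : π x ∈ LieIdeal.map π (LieAlgebra.derivedSeriesOfIdeal ℚ L k N) :=
      LieIdeal.mem_map hx
    rw [map_derivedSeriesOfIdeal π (lieQuotMk_surjective (LieAlgebra.radical ℚ L)), hπN, hM] at h1
    rw [LieSubmodule.mem_bot] at h1
    have : x ∈ (LieAlgebra.radical ℚ L) := by
      have := (Submodule.Quotient.mk_eq_zero (LieSubmodule.toSubmodule (LieAlgebra.radical ℚ L))).mp h1
      exact this
    exact this
  have hNsolv : LieAlgebra.IsSolvable N :=
    isSolvable_of_derived_le (inferInstance : LieAlgebra.IsSolvable (LieAlgebra.radical ℚ L)) k hNk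
  have hNrad : N ≤ (LieAlgebra.radical ℚ L) := (LieAlgebra.LieIdeal.solvable_iff_le_radical ℚ L N).mp hNsolv
  -- the copy of (derivedRadical L) inside K is a solvable ideal of K
  let E : LieIdeal ℚ K := LieIdeal.comap K.incl (derivedRadical L)
  haveI hDsolv : LieAlgebra.IsSolvable (derivedRadical L) :=
    LieAlgebra.le_solvable_ideal_solvable hDr inferInstance
  have hEsolv : LieAlgebra.IsSolvable E := by
    let g : E →ₗ⁅ℚ⁆ (derivedRadical L) :=
      { toFun := fun x => ⟨((x : K) : L), x.2⟩
        map_add' := fun x y => rfl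
        map_smul' := fun t x => rfl
        map_lie' := fun {x y} => rfl }
    have hg : Function.Injective g := by
      intro x y h
      have hxy := congrArg Subtype.val h
      exact Subtype.ext (Subtype.ext hxy)
    exact hg.lieAlgebra_isSolvable
  have hErad : E ≤ LieAlgebra.radical ℚ K :=
    (LieAlgebra.LieIdeal.solvable_iff_le_radical ℚ K E).mp hEsolv
  -- conclude
  ext x
  simp only [Submodule.mem_map]
  constructor
  · rintro ⟨y, hy, rfl⟩
    have hyN : (y : L) ∈ N := by
      show π (y : L) ∈ M
      exact LieIdeal.mem_map hy
    have hyrad : (y : L) ∈ (LieAlgebra.radical ℚ L) := hNrad hyN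
    have hyf : f (y : L) = 0 := y.2
    have : LieSubmodule.Quotient.mk' (derivedRadical L) (y : L) = 0 := by
      rw [← hproj _ hyrad]; exact hyf
    exact (LieSubmodule.Quotient.mk_eq_zero (derivedRadical L)).mp this
  · intro hx
    have hxK : x ∈ K := hD_mem_K x hx
    have hxE : (⟨x, hxK⟩ : K) ∈ E := by
      show K.incl ⟨x, hxK⟩ ∈ (derivedRadical L)
      exact hx
    exact ⟨⟨x, hxK⟩, hErad hxE, rfl⟩
end

section
/- Levi subalgebras of ker f are Levi subalgebras of 𝔤 (equation (levi-kerf) in the proof of Proposition 3.1): Let 𝔤 be a finite-dimensional Lie algebra over ℚ with solvable radical 𝔯, and let f : 𝔤 → 𝔯/[𝔯,𝔯] be a ℚ-linear map restricting to the canonical projection on 𝔯 and satisfying f([u,v]) = u·f(v) − v·f(u) for all u, v ∈ 𝔤. If 𝔥 is a Lie subalgebra of ker f with 𝔥 ∩ [𝔯,𝔯] = {0} and 𝔥 + [𝔯,𝔯] = ker f (i.e. 𝔥 is a complement in ker f of the radical [𝔯,𝔯] of ker f), then 𝔥 ∩ 𝔯 = {0} and 𝔥 + 𝔯 = 𝔤,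 i.e. 𝔤 = 𝔯 ⊕ 𝔥 is a Levi decomposition of 𝔤. -/
/-- **Levi subalgebras of `ker f` are Levi subalgebras of `𝔤`** (equation (levi-kerf) in
the proof of Proposition 3.1).  Let `𝔤 = L` be a finite-dimensional Lie algebra over ℚ with
solvable radical `𝔯`, and let `f : 𝔤 → 𝔯/[𝔯,𝔯]` be a ℚ-linear map (realized as a map into
`𝔤/[𝔯,𝔯]` with range inside the image of `𝔯`) restricting to the canonical projection on
`𝔯` and satisfying the cocycle identity.  If `𝔥` is a Lie subalgebra of `ker f` with
`𝔥 ∩ [𝔯,𝔯] = 0` and `𝔥 + [𝔯,𝔯] = ker f`, then `𝔥 ∩ 𝔯 = 0` and `𝔥 + 𝔯 = 𝔤`, i.e.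
`𝔤 = 𝔯 ⊕ 𝔥` is a Levi decomposition of `𝔤`. -/
theorem levi_of_ker_is_levi
    (L : Type*) [LieRing L] [LieAlgebra ℚ L] [Module.Finite ℚ L]
    (f : L →ₗ[ℚ] (L ⧸ derivedRadical L))
    (hrange : ∀ u : L, ∃ r ∈ LieAlgebra.radical ℚ L,
      f u = LieSubmodule.Quotient.mk' (derivedRadical L) r)
    (hproj : ∀ r ∈ LieAlgebra.radical ℚ L,
      f r = LieSubmodule.Quotient.mk' (derivedRadical L) r)
    (hcocycle : ∀ u v : L, f ⁅u, v⁆ = ⁅u, f v⁆ - ⁅v, f u⁆)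
    (H : LieSubalgebra ℚ L)
    (hH_le : H.toSubmodule ≤ LinearMap.ker f)
    (hH_inf : H.toSubmodule ⊓ LieSubmodule.toSubmodule (derivedRadical L) = ⊥)
    (hH_sup : H.toSubmodule ⊔ LieSubmodule.toSubmodule (derivedRadical L) =
      LinearMap.ker f) :
    H.toSubmodule ⊓ LieSubmodule.toSubmodule (LieAlgebra.radical ℚ L) = ⊥ ∧
      H.toSubmodule ⊔ LieSubmodule.toSubmodule (LieAlgebra.radical ℚ L) = ⊤ := by
  have hderiv_le : LieSubmodule.toSubmodule (derivedRadical L) ≤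
      LieSubmodule.toSubmodule (LieAlgebra.radical ℚ L) := by
    intro x hx
    exact LieSubmodule.lie_le_left (LieAlgebra.radical ℚ L) (LieAlgebra.radical ℚ L) hx
  constructor
  · rw [eq_bot_iff]
    rintro x ⟨hxH, hxr⟩
    have hf0 : f x = 0 := hH_le hxH
    have hmk := hproj x hxr
    rw [hf0] at hmk
    have hxd : x ∈ derivedRadical L :=
      (LieSubmodule.Quotient.mk_eq_zero (derivedRadical L)).1 hmk.symm
    have : x ∈ H.toSubmodule ⊓ LieSubmodule.toSubmodule (derivedRadical L) := ⟨hxH, hxd⟩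
    rw [hH_inf] at this
    exact this
  · rw [eq_top_iff]
    intro u _
    obtain ⟨r, hr, hfu⟩ := hrange u
    have hker : u - r ∈ LinearMap.ker f := by
      rw [LinearMap.mem_ker, map_sub, hfu, hproj r hr, sub_self]
    rw [← hH_sup] at hker
    have hsub : H.toSubmodule ⊔ LieSubmodule.toSubmodule (derivedRadical L) ≤
        H.toSubmodule ⊔ LieSubmodule.toSubmodule (LieAlgebra.radical ℚ L) :=
      sup_le_sup_left hderiv_le _
    have h1 : u - r ∈ H.toSubmodule ⊔ LieSubmodule.toSubmodule (LieAlgebra.radical ℚ L) :=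
      hsub hker
    have h2 : r ∈ H.toSubmodule ⊔ LieSubmodule.toSubmodule (LieAlgebra.radical ℚ L) :=
      Submodule.mem_sup_right hr
    have := Submodule.add_mem _ h1 h2
    simpa using this
end

section
/- Bound on conjugated unipotent matrices (used in the proofs of Lemmas 2.1 and 4.2): Let N ≥ 1, let a = diag(a_1, …, a_N) be a diagonal real N × N matrix with positive entries satisfying a_i / a_{i+1} ≤ 2/√3 for all i = 1, …, N−1, and let u = (u_{ij}) be an upper-triangular unipotent real N × N matrix with |u_{ij}| ≤ 1/2 for all i < j. Then the operator norm of a u a^{-1} with respect to the max norm on ℝ^N satisfies ‖a u a^{-1}‖_op ≤ (1/2)·(((2/√3)^N − 1)/((2/√3) − 1) + 1). -/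
open Finset

/-- **Bound on conjugated unipotent matrices.**
Let `a = diag (a 0, …, a (N-1))` be a diagonal real matrix with positive entries whose
consecutive ratios satisfy `a i / a (i+1) ≤ 2/√3`, and let `u` be upper-triangular unipotent
with off-diagonal entries bounded by `1/2`.  Then the operator norm of `a * u * a⁻¹` with
respect to the max norm on `ℝ^N` (i.e. the maximum over rows of the sum of the absolute
values of the entries of that row) is at most
`(1/2) * (((2/√3)^N − 1)/((2/√3) − 1) + 1)`. -/
theorem opNorm_conj_unipotent_le
    (N : ℕ) (hN : 1 ≤ N) (a : Fin N → ℝ) (hpos : ∀ i, 0 < a i)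
    (hratio : ∀ (i : Fin N) (h : (i : ℕ) + 1 < N), a i / a ⟨(i : ℕ) + 1, h⟩ ≤ 2 / Real.sqrt 3)
    (u : Matrix (Fin N) (Fin N) ℝ)
    (hdiag : ∀ i, u i i = 1)
    (hlower : ∀ i j : Fin N, j < i → u i j = 0)
    (hupper : ∀ i j : Fin N, i < j → |u i j| ≤ 1 / 2) :
    ∀ i : Fin N,
      ∑ j : Fin N,
          |(Matrix.diagonal a * u * Matrix.diagonal fun k => (a k)⁻¹) i j| ≤
        (1 / 2) * (((2 / Real.sqrt 3) ^ N - 1) / ((2 / Real.sqrt 3) - 1) + 1) := by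
  set r : ℝ := 2 / Real.sqrt 3 with hrdef
  have hs3 : (0:ℝ) < Real.sqrt 3 := Real.sqrt_pos.2 (by norm_num)
  have hs3lt : Real.sqrt 3 < 2 := by
    nlinarith [Real.sq_sqrt (by norm_num : (3:ℝ) ≥ 0), Real.sqrt_nonneg 3]
  have hr1 : 1 < r := by
    rw [hrdef, lt_div_iff₀ hs3, one_mul]; exact hs3lt
  have hr0 : 0 < r := by linarith
  -- ratio bound
  have key : ∀ (k : ℕ) (i : Fin N) (h : (i : ℕ) + k < N),
      a i / a ⟨(i : ℕ) + k, h⟩ ≤ r ^ k := by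
    intro k
    induction k with
    | zero =>
      intro i h
      have : (⟨(i : ℕ) + 0, h⟩ : Fin N) = i := by ext; simp
      rw [this, div_self (hpos i).ne', pow_zero]
    | succ k ih =>
      intro i h
      have h' : (i : ℕ) + k < N := by omega
      have h1 := ih i h'
      have h2 := hratio ⟨(i : ℕ) + k, h'⟩ (by omega)
      have hidx : (⟨((⟨(i : ℕ) + k, h'⟩ : Fin N) : ℕ) + 1, by omega⟩ : Fin N)
          = ⟨(i : ℕ) + (k + 1), h⟩ := by ext; simp [add_assoc]
      rw [hidx] at h2
      have e : a i / a ⟨(i : ℕ) + (k + 1), h⟩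
          = (a i / a ⟨(i : ℕ) + k, h'⟩) * (a ⟨(i : ℕ) + k, h'⟩ / a ⟨(i : ℕ) + (k + 1), h⟩) :=
        (div_mul_div_cancel₀ (hpos ⟨(i : ℕ) + k, h'⟩).ne').symm
      rw [e, pow_succ]
      exact mul_le_mul h1 h2 (div_nonneg (hpos _).le (hpos _).le) (pow_nonneg hr0.le k)
  intro i
  -- the ℕ-indexed bound function
  set c : ℕ → ℝ := fun n =>
    if n < (i : ℕ) then 0 else if n = (i : ℕ) then 1 else (1/2) * r ^ (n - (i : ℕ)) with hc
  set d : ℕ → ℝ := fun k => if k = 0 then 1 else (1/2) * r ^ k with hd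
  have hdnn : ∀ k, 0 ≤ d k := by
    intro k; rw [hd]; dsimp only; split
    · norm_num
    · positivity
  -- pointwise bound on entries
  have hb : ∀ j : Fin N,
      |(Matrix.diagonal a * u * Matrix.diagonal fun k => (a k)⁻¹) i j| ≤ c (j : ℕ) := by
    intro j
    have hentry : (Matrix.diagonal a * u * Matrix.diagonal fun k => (a k)⁻¹) i j
        = a i * u i j * (a j)⁻¹ := by
      simp [Matrix.mul_diagonal, Matrix.diagonal_mul]
    rw [hentry, hc]; dsimp only
    rcases lt_trichotomy (j : ℕ) (i : ℕ) with hlt | heq | hgt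
    · rw [if_pos hlt, hlower i j (by exact hlt), mul_zero, zero_mul, abs_zero]
    · rw [Fin.ext heq]
      rw [if_neg (lt_irrefl _), if_pos rfl, hdiag, mul_one,
        mul_inv_cancel₀ (hpos i).ne', abs_one]
    · rw [if_neg (by omega), if_neg (by omega)]
      have hij : i < j := hgt
      have hwit : (i : ℕ) + ((j : ℕ) - (i : ℕ)) < N := by omega
      have hj : (⟨(i : ℕ) + ((j : ℕ) - (i : ℕ)), hwit⟩ : Fin N) = j := by ext; simp; omega
      have hr2 : a i / a j ≤ r ^ ((j : ℕ) - (i : ℕ)) := by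
        have := key ((j : ℕ) - (i : ℕ)) i hwit
        rwa [hj] at this
      have : |a i * u i j * (a j)⁻¹| = (a i / a j) * |u i j| := by
        rw [abs_mul, abs_mul, abs_of_pos (hpos i), abs_of_pos (inv_pos.2 (hpos j))]
        rw [div_eq_mul_inv]; ring
      rw [this]
      calc (a i / a j) * |u i j| ≤ r ^ ((j : ℕ) - (i : ℕ)) * (1/2) :=
            mul_le_mul hr2 (hupper i j hij) (abs_nonneg _) (by positivity)
        _ = (1/2) * r ^ ((j : ℕ) - (i : ℕ)) := by ring
  have step1 : ∑ j : Fin N,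
      |(Matrix.diagonal a * u * Matrix.diagonal fun k => (a k)⁻¹) i j|
      ≤ ∑ n ∈ range N, d n := by
    calc ∑ j : Fin N, |(Matrix.diagonal a * u * Matrix.diagonal fun k => (a k)⁻¹) i j|
        ≤ ∑ j : Fin N, c (j : ℕ) := Finset.sum_le_sum fun j _ => hb j
      _ = ∑ n ∈ range N, c n := Fin.sum_univ_eq_sum_range c N
      _ = ∑ n ∈ Ico (i : ℕ) N, c n := by
          refine (Finset.sum_subset (fun n hn => mem_range.2 (mem_Ico.1 hn).2) ?_).symm
          intro n hn hn'
          rw [hc]; dsimp only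
          rw [if_pos (by simp [mem_Ico, mem_range] at hn hn' ⊢; omega)]
      _ = ∑ k ∈ range (N - (i : ℕ)), c ((i : ℕ) + k) := by rw [Finset.sum_Ico_eq_sum_range]
      _ = ∑ k ∈ range (N - (i : ℕ)), d k := by
          refine Finset.sum_congr rfl fun k _ => ?_
          rw [hc, hd]; dsimp only
          rcases Nat.eq_zero_or_pos k with rfl | hk
          · simp
          · have h1 : ¬((i : ℕ) + k < (i : ℕ)) := by omega
            have h2 : ¬((i : ℕ) + k = (i : ℕ)) := by omega
            have h3 : ¬(k = 0) := by omega
            rw [if_neg h1, if_neg h2, if_neg h3, Nat.add_sub_cancel_left]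
      _ ≤ ∑ n ∈ range N, d n :=
          Finset.sum_le_sum_of_subset_of_nonneg
            (Finset.range_subset_range.2 (by omega)) (fun n _ _ => hdnn n)
  -- compute the sum of d
  obtain ⟨M, rfl⟩ : ∃ M, N = M + 1 := ⟨N - 1, by omega⟩
  have hdsum : ∑ n ∈ range (M + 1), d n
      = (1/2) * (∑ k ∈ range M, r ^ (k + 1)) + 1 := by
    rw [Finset.sum_range_succ']
    have : ∀ k ∈ range M, d (k + 1) = (1/2) * r ^ (k + 1) := by
      intro k _; rw [hd]; simp
    rw [Finset.sum_congr rfl this, ← Finset.mul_sum, hd]; simp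
  have hgeom : (r ^ (M + 1) - 1) / (r - 1) = ∑ k ∈ range (M + 1), r ^ k :=
    (geom_sum_eq hr1.ne' (M + 1)).symm
  have hshift : ∑ k ∈ range (M + 1), r ^ k = (∑ k ∈ range M, r ^ (k + 1)) + 1 := by
    rw [Finset.sum_range_succ']; simp
  refine step1.trans ?_
  rw [hdsum, hgeom, hshift]
  ring_nf
  linarith
end
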